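/- arXiv:2501.00728 — 3 statements merged into one kernel-verified Lean document; each statement's English description precedes it below -/
import Mathlib

section
/- For any y ∈ (0, 1/e], if there exists x ∈ (0, 1/e] such that x·ln(1/x) = y, then x ≥ y / (2·ln(1/y)). -/
theorem stmt0 (y : ℝ) (hy : y ∈ Set.Ioc 0 (1 / Real.exp 1))
    (x : ℝ) (hx : x ∈ Set.Ioc 0 (1 / Real.exp 1))
    (hxy : x * Real.log (1 / x) = y) :
    y / (2 * Real.log (1 / y)) ≤ x := by
  obtain ⟨hy0, hy1⟩ := hy
  obtain ⟨hx0, hx1⟩ := hx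
  set L := Real.log (1 / x) with hL
  have hLx : L = -Real.log x := by rw [hL, one_div, Real.log_inv]
  have hL1 : 1 ≤ L := by
    have : Real.log x ≤ Real.log (1 / Real.exp 1) := Real.log_le_log hx0 hx1
    rw [one_div, Real.log_inv, Real.log_exp] at this
    rw [hLx]; linarith
  have hL0 : 0 < L := by linarith
  -- 2 log L ≤ L
  have hs : Real.sqrt L ^ 2 = L := Real.sq_sqrt hL0.le
  have hs0 : 0 < Real.sqrt L := Real.sqrt_pos.mpr hL0
  have hlogL : Real.log L = 2 * Real.log (Real.sqrt L) := by
    rw [Real.log_sqrt hL0.le]; ring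
  have h1 : Real.log (Real.sqrt L) ≤ Real.sqrt L - 1 :=
    Real.log_le_sub_one_of_pos hs0
  have key : 2 * Real.log L ≤ L := by
    have : (Real.sqrt L - 2) ^ 2 ≥ 0 := sq_nonneg _
    nlinarith [hs, h1, hlogL]
  -- log (1/y) = L - log L
  have hlogy : Real.log (1 / y) = L - Real.log L := by
    rw [one_div, Real.log_inv, ← hxy, Real.log_mul (ne_of_gt hx0) (ne_of_gt hL0), hLx]
    ring
  have hden : 0 < 2 * Real.log (1 / y) := by
    rw [hlogy]; nlinarith [key, hL1]
  rw [div_le_iff₀ hden, hlogy, ← hxy]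
  nlinarith [key, hL1, hx0]
end

section
/- Let X and Y be two independent nonnegative continuous random variables such that there exist constants C₁, C₂, δ₁, δ₂ > 0 with Pr[X ≥ T] ≤ C₁/T + δ₁ and Pr[Y ≥ T] ≤ C₂/T + δ₂ for all T > 0. Then for all T > C₁C₂, Pr[X·Y ≥ T] ≤ 2C₁C₂/T + (C₁C₂/T)·ln(T/(C₁C₂)) + δ₁ + 2δ₂. -/
open MeasureTheory ProbabilityTheory

set_option maxHeartbeats 1000000

private lemma abel_sum_aux (G v : ℕ → ℝ) (n : ℕ) :
    ∑ i ∈ Finset.range n, (G i - G (i+1)) * v (i+1)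
      = ∑ i ∈ Finset.range n, G i * (v (i+1) - v i) + G 0 * v 0 - G n * v n := by
  induction n with
  | zero => simp
  | succ n ih => rw [Finset.sum_range_succ, Finset.sum_range_succ, ih]; ring

private lemma find_interval_aux (v : ℕ → ℝ) (y : ℝ) :
    ∀ n : ℕ, v 0 ≤ y → y < v n → ∃ i < n, v i ≤ y ∧ y < v (i+1) := by
  intro n
  induction n with
  | zero => intro h0 hn; exact absurd (h0.trans_lt hn) (lt_irrefl _)
  | succ n ih =>
    intro h0 hn
    by_cases h : y < v n
    · obtain ⟨i, hi, h1, h2⟩ := ih h0 h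
      exact ⟨i, hi.trans (Nat.lt_succ_self n), h1, h2⟩
    · exact ⟨n, Nat.lt_succ_self n, le_of_not_gt h, hn⟩

theorem stmt3 {Ω : Type*} [MeasurableSpace Ω] (μ : Measure Ω) [IsProbabilityMeasure μ]
    (X Y : Ω → ℝ) (hX : Measurable X) (hY : Measurable Y)
    (hindep : IndepFun X Y μ)
    (hXnn : ∀ ω, 0 ≤ X ω) (hYnn : ∀ ω, 0 ≤ Y ω)
    (hXcont : μ.map X ≪ volume) (hYcont : μ.map Y ≪ volume)
    (C₁ C₂ δ₁ δ₂ : ℝ) (hC₁ : 0 < C₁) (hC₂ : 0 < C₂) (hδ₁ : 0 < δ₁) (hδ₂ : 0 < δ₂)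
    (htailX : ∀ T : ℝ, 0 < T → (μ {ω | T ≤ X ω}).toReal ≤ C₁ / T + δ₁)
    (htailY : ∀ T : ℝ, 0 < T → (μ {ω | T ≤ Y ω}).toReal ≤ C₂ / T + δ₂)
    (T : ℝ) (hT : C₁ * C₂ < T) :
    (μ {ω | T ≤ X ω * Y ω}).toReal ≤
      2 * C₁ * C₂ / T + C₁ * C₂ / T * Real.log (T / (C₁ * C₂)) + δ₁ + 2 * δ₂ := by
  have hC₁₂ : 0 < C₁ * C₂ := mul_pos hC₁ hC₂
  have hT0 : 0 < T := hC₁₂.trans hT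
  set a : ℝ := C₁ * C₂ / T with ha_def
  have ha0 : 0 < a := div_pos hC₁₂ hT0
  have ha1 : a < 1 := (div_lt_one hT0).2 hT
  set L : ℝ := Real.log (T / (C₁ * C₂)) with hL_def
  have hL0 : 0 < L := Real.log_pos ((one_lt_div hC₁₂).2 hT)
  refine le_of_forall_pos_le_add fun ε hε => ?_
  -- choose the number of grid intervals
  obtain ⟨m₀, hm₀⟩ := exists_nat_ge (max L (a * L ^ 2 / ε))
  set m : ℕ := m₀ + 1 with hm_def
  have hm0 : 0 < (m : ℝ) := by positivity
  have hmL : L ≤ (m : ℝ) := le_trans (le_max_left _ _) (hm₀.trans (by exact_mod_cast Nat.le_succ m₀))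
  have hmε : a * L ^ 2 / ε ≤ (m : ℝ) :=
    le_trans (le_max_right _ _) (hm₀.trans (by exact_mod_cast Nat.le_succ m₀))
  set r : ℝ := Real.exp (L / m) with hr_def
  have hr1 : 1 ≤ r := Real.one_le_exp (by positivity)
  have hrm : r ^ m = T / (C₁ * C₂) := by
    rw [hr_def, ← Real.exp_nat_mul, mul_div_cancel₀ _ (ne_of_gt hm0),
      Real.exp_log (div_pos hT0 hC₁₂)]
  -- the grid
  set v : ℕ → ℝ := fun i => if i = 0 then 0 else C₂ * r ^ (i - 1) with hv_def
  have hv0 : v 0 = 0 := rfl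
  have hvs : ∀ i : ℕ, v (i+1) = C₂ * r ^ i := by intro i; simp [hv_def]
  have hvpos : ∀ i : ℕ, 0 < v (i+1) := by
    intro i; rw [hvs]; positivity
  have hvmono : ∀ i : ℕ, v i ≤ v (i+1) := by
    intro i
    cases i with
    | zero => rw [hv0]; exact (hvpos 0).le
    | succ j =>
      rw [hvs, hvs]
      have : (0:ℝ) < r ^ j := by positivity
      have h1 : r ^ j ≤ r ^ (j+1) := by
        rw [pow_succ]
        nlinarith
      nlinarith
  set n : ℕ := m + 1 with hn_def
  have hvn : v n = T / C₁ := by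
    rw [hn_def, hvs, hrm]
    field_simp
  have hvnpos : 0 < v n := hvpos m
  -- events
  set E : ℕ → Set Ω := fun i => X ⁻¹' Set.Ici (T / v (i+1)) ∩ Y ⁻¹' Set.Ico (v i) (v (i+1))
    with hE_def
  set A : Set Ω := Y ⁻¹' Set.Ici (v n) with hA_def
  have hmeasA : MeasurableSet A := hY measurableSet_Ici
  have hmeasE : ∀ i, MeasurableSet (E i) := fun i =>
    (hX measurableSet_Ici).inter (hY measurableSet_Ico)
  -- the cover
  have hcover : {ω | T ≤ X ω * Y ω} ⊆ A ∪ ⋃ i ∈ Finset.range n, E i := by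
    intro ω hω
    simp only [Set.mem_setOf_eq] at hω
    by_cases hA' : v n ≤ Y ω
    · exact Or.inl hA'
    · right
      have hY0 : 0 < Y ω := by
        rcases (hYnn ω).lt_or_eq with h | h
        · exact h
        · exfalso; rw [← h, mul_zero] at hω; linarith
      obtain ⟨i, hi, h1, h2⟩ := find_interval_aux v (Y ω) n (by rw [hv0]; exact hYnn ω)
        (lt_of_not_ge hA')
      refine Set.mem_biUnion (Finset.mem_range.2 hi) ⟨?_, h1, h2⟩
      have hXge : T / Y ω ≤ X ω := (div_le_iff₀ hY0).2 hω
      have hdd : T / v (i+1) ≤ T / Y ω := by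
        apply div_le_div_of_nonneg_left hT0.le hY0 h2.le
      exact Set.mem_Ici.2 (hdd.trans hXge)
  -- measure subadditivity
  have key : μ {ω | T ≤ X ω * Y ω} ≤ μ A + ∑ i ∈ Finset.range n, μ (E i) :=
    (measure_mono hcover).trans ((measure_union_le _ _).trans
      (add_le_add_right (measure_biUnion_finset_le _ _) _))
  have hsum_ne : ∀ i ∈ Finset.range n, μ (E i) ≠ ⊤ := fun i _ => measure_ne_top μ _
  have hfin : μ A + ∑ i ∈ Finset.range n, μ (E i) ≠ ⊤ :=
    ENNReal.add_ne_top.2 ⟨measure_ne_top μ A, (ENNReal.sum_lt_top.2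
      (fun i hi => lt_of_le_of_ne le_top (hsum_ne i hi))).ne⟩
  have main : (μ {ω | T ≤ X ω * Y ω}).toReal
      ≤ (μ A).toReal + ∑ i ∈ Finset.range n, (μ (E i)).toReal := by
    have h1 := ENNReal.toReal_mono hfin key
    rwa [ENNReal.toReal_add (measure_ne_top μ A) ((ENNReal.sum_lt_top.2
      (fun i hi => lt_of_le_of_ne le_top (hsum_ne i hi))).ne),
      ENNReal.toReal_sum hsum_ne] at h1
  -- notation for probabilities
  set G : ℕ → ℝ := fun i => (μ (Y ⁻¹' Set.Ici (v i))).toReal with hG_def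
  set q : ℕ → ℝ := fun i => (μ (Y ⁻¹' Set.Ico (v i) (v (i+1)))).toReal with hq_def
  set p : ℕ → ℝ := fun i => (μ (X ⁻¹' Set.Ici (T / v (i+1)))).toReal with hp_def
  have hEi : ∀ i, (μ (E i)).toReal = p i * q i := by
    intro i
    rw [hE_def]
    simp only
    rw [hindep.measure_inter_preimage_eq_mul _ _ measurableSet_Ici measurableSet_Ico,
      ENNReal.toReal_mul]
  have hGq : ∀ i, G i = q i + G (i+1) := by
    intro i
    have hsplit : Set.Ici (v i) = Set.Ico (v i) (v (i+1)) ∪ Set.Ici (v (i+1)) :=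
      (Set.Ico_union_Ici_eq_Ici (hvmono i)).symm
    have hdisj : Disjoint (Y ⁻¹' Set.Ico (v i) (v (i+1))) (Y ⁻¹' Set.Ici (v (i+1))) :=
      Disjoint.preimage Y ((Set.Iio_disjoint_Ici le_rfl).mono_left Set.Ico_subset_Iio_self)
    rw [hG_def]
    simp only
    rw [hsplit, Set.preimage_union,
      measure_union hdisj (hY measurableSet_Ici),
      ENNReal.toReal_add (measure_ne_top μ _) (measure_ne_top μ _)]
  have hq0 : ∀ i, 0 ≤ q i := fun i => ENNReal.toReal_nonneg
  have hG0 : ∀ i, 0 ≤ G i := fun i => ENNReal.toReal_nonneg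
  have hG1 : ∀ i, G i ≤ 1 := by
    intro i
    rw [hG_def]
    simp only
    rw [← ENNReal.toReal_one]
    exact ENNReal.toReal_mono ENNReal.one_ne_top prob_le_one
  have hp0 : ∀ i, 0 ≤ p i := fun i => ENNReal.toReal_nonneg
  -- tail bounds
  have hpbound : ∀ i, p i ≤ C₁ * v (i+1) / T + δ₁ := by
    intro i
    have h1 : 0 < T / v (i+1) := div_pos hT0 (hvpos i)
    have h2 := htailX _ h1
    have h3 : (X ⁻¹' Set.Ici (T / v (i+1))) = {ω | T / v (i+1) ≤ X ω} := rfl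
    rw [hp_def]
    simp only [h3]
    calc (μ {ω | T / v (i+1) ≤ X ω}).toReal ≤ C₁ / (T / v (i+1)) + δ₁ := h2
      _ = C₁ * v (i+1) / T + δ₁ := by rw [div_div_eq_mul_div]
  have hGbound : ∀ i : ℕ, G (i+1) ≤ C₂ / v (i+1) + δ₂ := by
    intro i
    have h2 := htailY _ (hvpos i)
    have h3 : (Y ⁻¹' Set.Ici (v (i+1))) = {ω | v (i+1) ≤ Y ω} := rfl
    rw [hG_def]; simp only [h3]; exact h2
  -- sum of q's
  have hqsum : ∑ i ∈ Finset.range n, q i = G 0 - G n := by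
    have : ∀ i, q i = G i - G (i+1) := fun i => by rw [hGq i]; ring
    simp_rw [this]
    exact Finset.sum_range_sub' G n
  have hqsum1 : ∑ i ∈ Finset.range n, q i ≤ 1 := by
    rw [hqsum]; have := hG1 0; have := hG0 n; linarith
  -- Abel summation bound
  have habel : ∑ i ∈ Finset.range n, q i * v (i+1)
      ≤ ∑ i ∈ Finset.range n, G i * (v (i+1) - v i) := by
    have hqGv : ∀ i, q i * v (i+1) = (G i - G (i+1)) * v (i+1) := fun i => by
      rw [hGq i]; ring
    simp_rw [hqGv]
    rw [abel_sum_aux G v n, hv0]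
    have h1 : 0 ≤ G n * v n := mul_nonneg (hG0 n) hvnpos.le
    nlinarith
  -- bound the Riemann-type sum
  have hriemann : ∑ i ∈ Finset.range n, G i * (v (i+1) - v i)
      ≤ C₂ + m * (C₂ * (r - 1)) + δ₂ * v n := by
    rw [hn_def, Finset.sum_range_succ']
    have hfirst : G 0 * (v (0+1) - v 0) ≤ C₂ := by
      rw [hv0, hvs, pow_zero, mul_one, sub_zero]
      nlinarith [hG1 0, hG0 0]
    have hterm : ∀ i ∈ Finset.range m, G (i+1) * (v (i+1+1) - v (i+1))
        ≤ C₂ * (r - 1) + δ₂ * (v (i+2) - v (i+1)) := by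
      intro i _
      have hΔ : 0 ≤ v (i+2) - v (i+1) := sub_nonneg.2 (hvmono (i+1))
      have hGb := hGbound i
      have hmain : C₂ / v (i+1) * (v (i+2) - v (i+1)) = C₂ * (r - 1) := by
        rw [hvs, hvs]
        have hrp : (0:ℝ) < r ^ i := by positivity
        field_simp
        ring
      calc G (i+1) * (v (i+1+1) - v (i+1))
          ≤ (C₂ / v (i+1) + δ₂) * (v (i+2) - v (i+1)) := by
            apply mul_le_mul_of_nonneg_right hGb hΔ
        _ = C₂ / v (i+1) * (v (i+2) - v (i+1)) + δ₂ * (v (i+2) - v (i+1)) := by ring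
        _ = C₂ * (r - 1) + δ₂ * (v (i+2) - v (i+1)) := by rw [hmain]
    have hsum2 : ∑ i ∈ Finset.range m, G (i+1) * (v (i+1+1) - v (i+1))
        ≤ ∑ i ∈ Finset.range m, (C₂ * (r - 1) + δ₂ * (v (i+2) - v (i+1))) :=
      Finset.sum_le_sum hterm
    have htel : ∑ i ∈ Finset.range m, (v (i+2) - v (i+1)) = v (m+1) - v 1 := by
      have := Finset.sum_range_sub (fun i => v (i+1)) m
      simpa using this
    have hsum3 : ∑ i ∈ Finset.range m, (C₂ * (r - 1) + δ₂ * (v (i+2) - v (i+1)))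
        = m * (C₂ * (r - 1)) + δ₂ * (v (m+1) - v 1) := by
      rw [Finset.sum_add_distrib, Finset.sum_const, Finset.card_range, ← Finset.mul_sum, htel]
      simp [nsmul_eq_mul]
    have hv1nn : 0 ≤ v 1 := (hvpos 0).le
    have hδv : δ₂ * (v (m+1) - v 1) ≤ δ₂ * v n := by
      have h := mul_le_mul_of_nonneg_left (sub_le_self (v (m+1)) hv1nn) hδ₂.le
      rw [hn_def]; exact h
    calc (∑ i ∈ Finset.range m, G (i+1) * (v (i+1+1) - v (i+1))) + G 0 * (v (0+1) - v 0)
        ≤ (m * (C₂ * (r - 1)) + δ₂ * (v (m+1) - v 1)) + C₂ := by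
          rw [← hsum3]; exact add_le_add hsum2 hfirst
      _ ≤ C₂ + m * (C₂ * (r - 1)) + δ₂ * v n := by linarith [hδv]
  -- bound on r - 1
  have hr_sub : r - 1 ≤ L / m + (L / m) ^ 2 := by
    have hx0 : 0 ≤ L / m := by positivity
    have hx1 : L / m ≤ 1 := by
      rw [div_le_one hm0]; exact hmL
    have := Real.abs_exp_sub_one_sub_id_le (x := L / m) (by rw [abs_of_nonneg hx0]; exact hx1)
    have h1 : Real.exp (L / m) - 1 - L / m ≤ (L / m) ^ 2 := (abs_le.1 this).2
    rw [hr_def]; linarith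
  have hmr : (m : ℝ) * (r - 1) ≤ L + L ^ 2 / m := by
    have h1 : (m : ℝ) * (L / m + (L / m) ^ 2) = L + L ^ 2 / m := by
      field_simp
    calc (m : ℝ) * (r - 1) ≤ (m : ℝ) * (L / m + (L / m) ^ 2) := by
          apply mul_le_mul_of_nonneg_left hr_sub hm0.le
      _ = L + L ^ 2 / m := h1
  have hεm : a * (L ^ 2 / m) ≤ ε := by
    have h := mul_le_mul_of_nonneg_right hmε hε.le
    have h2 : a * L ^ 2 / ε * ε = a * L ^ 2 := by field_simp
    rw [← mul_div_assoc, div_le_iff₀ hm0]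
    nlinarith [h, h2]
  -- the tail of Y bound
  have hAbound : (μ A).toReal ≤ a + δ₂ := by
    have h2 := htailY _ hvnpos
    have h3 : A = {ω | v n ≤ Y ω} := rfl
    rw [h3]
    refine h2.trans ?_
    have : C₂ / v n = a := by
      rw [hvn, ha_def, div_div_eq_mul_div]
      ring_nf
    rw [this]
  -- assemble the per-term bounds
  have hterms : ∑ i ∈ Finset.range n, (μ (E i)).toReal
      ≤ C₁ / T * (∑ i ∈ Finset.range n, q i * v (i+1)) + δ₁ * (∑ i ∈ Finset.range n, q i) := by
    have h1 : ∀ i ∈ Finset.range n, (μ (E i)).toReal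
        ≤ C₁ / T * (q i * v (i+1)) + δ₁ * q i := by
      intro i _
      rw [hEi i]
      calc p i * q i ≤ (C₁ * v (i+1) / T + δ₁) * q i :=
            mul_le_mul_of_nonneg_right (hpbound i) (hq0 i)
        _ = C₁ / T * (q i * v (i+1)) + δ₁ * q i := by ring
    calc ∑ i ∈ Finset.range n, (μ (E i)).toReal
        ≤ ∑ i ∈ Finset.range n, (C₁ / T * (q i * v (i+1)) + δ₁ * q i) :=
          Finset.sum_le_sum h1
      _ = C₁ / T * (∑ i ∈ Finset.range n, q i * v (i+1))
          + δ₁ * (∑ i ∈ Finset.range n, q i) := by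
          rw [Finset.sum_add_distrib, ← Finset.mul_sum, ← Finset.mul_sum]
  -- final computation
  have hqv_bound : ∑ i ∈ Finset.range n, q i * v (i+1)
      ≤ C₂ + m * (C₂ * (r - 1)) + δ₂ * (T / C₁) := by
    refine (habel.trans hriemann).trans ?_
    rw [hvn]
  have hCT : C₁ / T * C₂ = a := by rw [ha_def]; ring
  have hCTd : C₁ / T * (δ₂ * (T / C₁)) = δ₂ := by
    field_simp
  have hCTm : C₁ / T * (m * (C₂ * (r - 1))) = a * (m * (r - 1)) := by
    rw [ha_def]; ring
  have hfinal : (μ {ω | T ≤ X ω * Y ω}).toReal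
      ≤ (a + δ₂) + (a + a * (m * (r - 1)) + δ₂ + δ₁) := by
    refine main.trans ?_
    have h2 : C₁ / T * (∑ i ∈ Finset.range n, q i * v (i+1))
        ≤ a + a * (m * (r - 1)) + δ₂ := by
      have h3 : C₁ / T * (∑ i ∈ Finset.range n, q i * v (i+1))
          ≤ C₁ / T * (C₂ + m * (C₂ * (r - 1)) + δ₂ * (T / C₁)) :=
        mul_le_mul_of_nonneg_left hqv_bound (by positivity)
      calc C₁ / T * (∑ i ∈ Finset.range n, q i * v (i+1))
          ≤ C₁ / T * C₂ + C₁ / T * (m * (C₂ * (r - 1))) + C₁ / T * (δ₂ * (T / C₁)) := by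
            rw [← mul_add, ← mul_add] at *; linarith [h3]
        _ = a + a * (m * (r - 1)) + δ₂ := by rw [hCT, hCTd, hCTm]
    have h4 : δ₁ * (∑ i ∈ Finset.range n, q i) ≤ δ₁ := by
      nlinarith [hqsum1, Finset.sum_nonneg (fun i (_ : i ∈ Finset.range n) => hq0 i)]
    have h5 := hterms
    have h6 := hAbound
    linarith
  have hlast : a * (m * (r - 1)) ≤ a * L + ε := by
    have h1 : a * (m * (r - 1)) ≤ a * (L + L ^ 2 / m) :=
      mul_le_mul_of_nonneg_left hmr ha0.le
    have h2 : a * (L + L ^ 2 / m) = a * L + a * (L ^ 2 / m) := by ring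
    linarith [hεm]
  have hgoal : 2 * C₁ * C₂ / T = 2 * a := by rw [ha_def]; ring
  have hgoal2 : C₁ * C₂ / T * Real.log (T / (C₁ * C₂)) = a * L := by rw [ha_def, hL_def]
  rw [hgoal, hgoal2]
  linarith
end

section
/- Let X and Y be two independent nonnegative continuous random variables such that there exist constants C₁, C₂, δ₁, δ₂ > 0 with Pr[X ≥ T] ≤ C₁/T + δ₁ and Pr[Y ≥ T] ≤ C₂/T + δ₂ for all T > 0. Then for any δ ∈ (0,1], Pr[X·Y ≥ 6·C₁·C₂·ln(3/δ)/δ] ≤ δ + δ₁ + 2δ₂. -/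
open MeasureTheory ProbabilityTheory

private lemma toReal_union_le' {Ω : Type*} [MeasurableSpace Ω] (μ : Measure Ω)
    [IsProbabilityMeasure μ] (A B : Set Ω) :
    (μ (A ∪ B)).toReal ≤ (μ A).toReal + (μ B).toReal := by
  rw [← ENNReal.toReal_add (measure_ne_top μ A) (measure_ne_top μ B)]
  exact ENNReal.toReal_mono
    (ENNReal.add_ne_top.2 ⟨measure_ne_top μ A, measure_ne_top μ B⟩) (measure_union_le A B)

private lemma toReal_biUnion_le' {Ω : Type*} [MeasurableSpace Ω] (μ : Measure Ω)
    [IsProbabilityMeasure μ] (K : ℕ) (A : ℕ → Set Ω) :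
    (μ (⋃ k ∈ Finset.range K, A k)).toReal ≤ ∑ k ∈ Finset.range K, (μ (A k)).toReal := by
  rw [← ENNReal.toReal_sum (fun k _ => measure_ne_top μ (A k))]
  exact ENNReal.toReal_mono
    (ENNReal.sum_ne_top.2 (fun k _ => measure_ne_top μ (A k)))
    (measure_biUnion_finset_le _ _)

private lemma toReal_prob_le_one {Ω : Type*} [MeasurableSpace Ω] (μ : Measure Ω)
    [IsProbabilityMeasure μ] (s : Set Ω) : (μ s).toReal ≤ 1 :=
  (ENNReal.toReal_mono ENNReal.one_ne_top prob_le_one).trans (by simp)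

set_option maxHeartbeats 4000000 in
theorem stmt4 {Ω : Type*} [MeasurableSpace Ω] (μ : Measure Ω) [IsProbabilityMeasure μ]
    (X Y : Ω → ℝ) (hX : Measurable X) (hY : Measurable Y)
    (hindep : IndepFun X Y μ)
    (hXnn : ∀ ω, 0 ≤ X ω) (hYnn : ∀ ω, 0 ≤ Y ω)
    (hXcont : μ.map X ≪ volume) (hYcont : μ.map Y ≪ volume)
    (C₁ C₂ δ₁ δ₂ : ℝ) (hC₁ : 0 < C₁) (hC₂ : 0 < C₂) (hδ₁ : 0 < δ₁) (hδ₂ : 0 < δ₂)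
    (htailX : ∀ T : ℝ, 0 < T → (μ {ω | T ≤ X ω}).toReal ≤ C₁ / T + δ₁)
    (htailY : ∀ T : ℝ, 0 < T → (μ {ω | T ≤ Y ω}).toReal ≤ C₂ / T + δ₂)
    (δ : ℝ) (hδ : δ ∈ Set.Ioc (0 : ℝ) 1) :
    (μ {ω | 6 * C₁ * C₂ * Real.log (3 / δ) / δ ≤ X ω * Y ω}).toReal ≤ δ + δ₁ + 2 * δ₂ := by
  obtain ⟨hδ0, hδ1⟩ := hδ
  set L := Real.log (3 / δ) with hLdef
  have h3δ : (1:ℝ) < 3 / δ := by rw [lt_div_iff₀ hδ0]; linarith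
  have hL0 : 0 < L := Real.log_pos h3δ
  by_cases hcase : 1/3 < δ
  · -- Case A : large δ, simple two-way union bound
    -- lower bound on δ * L
    have hδL : 2 ≤ 3 * (δ * L) := by
      have e1 : Real.log (2*δ) = Real.log 2 + Real.log δ :=
        Real.log_mul (by norm_num) hδ0.ne'
      have e2 : Real.log ((2:ℝ)/3) = Real.log 2 - Real.log 3 :=
        Real.log_div (by norm_num) (by norm_num)
      have e3 : L = Real.log 3 - Real.log δ := by
        rw [hLdef, Real.log_div (by norm_num) hδ0.ne']
      have b1 : Real.log (2*δ) ≤ 2*δ - 1 := Real.log_le_sub_one_of_pos (by linarith)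
      have b2 : Real.log ((2:ℝ)/3) ≤ 2/3 - 1 := Real.log_le_sub_one_of_pos (by norm_num)
      have b3 : (0.6931471803:ℝ) < Real.log 2 := Real.log_two_gt_d9
      -- L ≥ 2 log 2 + 4/3 - 2δ
      have hLlb : 2 * Real.log 2 + 4/3 - 2*δ ≤ L := by linarith
      nlinarith [mul_le_mul_of_nonneg_left hLlb hδ0.le,
        mul_nonneg (by linarith : (0:ℝ) ≤ 3*δ - 1) (by linarith : (0:ℝ) ≤ 1 - δ)]
    set s := Real.sqrt (δ/(6*L)) with hsdef
    have hs0 : 0 < s := Real.sqrt_pos.2 (by positivity)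
    have hs2 : s^2 = δ/(6*L) := Real.sq_sqrt (by positivity)
    have hsδ : 2*s ≤ δ := by
      have h1 : s ≤ δ/2 := by
        rw [show δ/2 = Real.sqrt ((δ/2)^2) from (Real.sqrt_sq (by linarith)).symm, hsdef]
        apply Real.sqrt_le_sqrt
        rw [div_le_iff₀ (by positivity)]
        nlinarith
      linarith
    have hsub : {ω | 6 * C₁ * C₂ * L / δ ≤ X ω * Y ω} ⊆
        {ω | C₁/s ≤ X ω} ∪ {ω | C₂/s ≤ Y ω} := by
      intro ω hω
      simp only [Set.mem_setOf_eq, Set.mem_union] at hω ⊢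
      by_contra h
      push_neg at h
      obtain ⟨h1, h2⟩ := h
      have hlt : X ω * Y ω < (C₁/s)*(C₂/s) :=
        calc X ω * Y ω ≤ X ω * (C₂/s) := mul_le_mul_of_nonneg_left h2.le (hXnn ω)
        _ < (C₁/s)*(C₂/s) := mul_lt_mul_of_pos_right h1 (by positivity)
      have hMeq : (C₁/s)*(C₂/s) = 6 * C₁ * C₂ * L / δ := by
        rw [div_mul_div_comm]
        have hss : s * s = δ/(6*L) := by rw [← sq]; exact hs2
        rw [hss]
        field_simp
      rw [hMeq] at hlt
      linarith
    calc (μ {ω | 6 * C₁ * C₂ * L / δ ≤ X ω * Y ω}).toReal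
        ≤ (μ ({ω | C₁/s ≤ X ω} ∪ {ω | C₂/s ≤ Y ω})).toReal :=
          ENNReal.toReal_mono (measure_ne_top _ _) (measure_mono hsub)
      _ ≤ (μ {ω | C₁/s ≤ X ω}).toReal + (μ {ω | C₂/s ≤ Y ω}).toReal :=
          toReal_union_le' μ _ _
      _ ≤ (C₁/(C₁/s) + δ₁) + (C₂/(C₂/s) + δ₂) :=
          add_le_add (htailX _ (by positivity)) (htailY _ (by positivity))
      _ = s + δ₁ + (s + δ₂) := by
          have e1 : C₁/(C₁/s) = s := by
            rw [div_div_eq_mul_div, mul_comm, mul_div_assoc, div_self hC₁.ne', mul_one]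
          have e2 : C₂/(C₂/s) = s := by
            rw [div_div_eq_mul_div, mul_comm, mul_div_assoc, div_self hC₂.ne', mul_one]
          rw [e1, e2]
      _ ≤ δ + δ₁ + 2*δ₂ := by linarith
  · -- Case B : small δ, dyadic decomposition
    push_neg at hcase
    have h9 : (9:ℝ) ≤ 3/δ := by rw [le_div_iff₀ hδ0]; linarith
    have hL2 : (2:ℝ) ≤ L := by
      have h9' : Real.log 9 ≤ L := Real.log_le_log (by norm_num) h9
      have h2 : (2:ℝ) ≤ Real.log 9 := by
        rw [Real.le_log_iff_exp_le (by norm_num)]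
        have he : Real.exp 2 = Real.exp 1 * Real.exp 1 := by
          rw [← Real.exp_add]; norm_num
        nlinarith [Real.exp_one_lt_d9, Real.exp_pos 1]
      linarith
    -- choice of K
    have hceil2 : 2 ≤ ⌈(3:ℝ)/δ⌉₊ := by
      have h2 : (2:ℝ) ≤ (⌈(3:ℝ)/δ⌉₊ : ℝ) := le_trans (by linarith) (Nat.le_ceil _)
      exact_mod_cast h2
    obtain ⟨K, hK1, hKlow, hKup⟩ :
        ∃ K : ℕ, 1 ≤ K ∧ 3/δ ≤ (2:ℝ)^K ∧ (2:ℝ)^(K-1) < 3/δ := by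
      refine ⟨Nat.clog 2 ⌈(3:ℝ)/δ⌉₊, Nat.clog_pos (by norm_num) hceil2, ?_, ?_⟩
      · calc (3:ℝ)/δ ≤ (⌈(3:ℝ)/δ⌉₊ : ℝ) := Nat.le_ceil _
          _ ≤ (((2:ℕ)^(Nat.clog 2 ⌈(3:ℝ)/δ⌉₊) : ℕ) : ℝ) := by
              exact_mod_cast Nat.le_pow_clog (by norm_num) _
          _ = (2:ℝ)^(Nat.clog 2 ⌈(3:ℝ)/δ⌉₊) := by push_cast; ring
      · have h1 : (2:ℕ)^(Nat.clog 2 ⌈(3:ℝ)/δ⌉₊ - 1) < ⌈(3:ℝ)/δ⌉₊ := by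
          have := Nat.pow_pred_clog_lt_self (b := 2) (by norm_num) (x := ⌈(3:ℝ)/δ⌉₊)
            (by omega)
          simpa [Nat.pred_eq_sub_one] using this
        have h2 : (⌈(3:ℝ)/δ⌉₊ : ℝ) < 3/δ + 1 := Nat.ceil_lt_add_one (by positivity)
        have h3 : ((2:ℕ)^(Nat.clog 2 ⌈(3:ℝ)/δ⌉₊ - 1) : ℝ) + 1 ≤ (⌈(3:ℝ)/δ⌉₊ : ℝ) := by
          exact_mod_cast h1
        push_cast at h3
        linarith
    have hK1R : (1:ℝ) ≤ (K:ℝ) := by exact_mod_cast hK1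
    have hK4 : (K:ℝ) + 3 ≤ 4*L := by
      have hlog : ((K:ℝ) - 1) * Real.log 2 < L := by
        have hh := Real.log_lt_log (by positivity) hKup
        rw [Real.log_pow, Nat.cast_sub hK1, Nat.cast_one] at hh
        exact hh
      nlinarith [Real.log_two_gt_d9, Real.log_two_lt_d9,
        mul_nonneg (by linarith : (0:ℝ) ≤ (K:ℝ) - 1)
          (by nlinarith [Real.log_two_gt_d9] : (0:ℝ) ≤ Real.log 2 - 0.6931471803)]
    have hhalfK : ((1:ℝ)/2)^K ≤ δ/3 := by
      rw [div_le_iff₀ hδ0] at hKlow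
      rw [div_pow, one_pow, div_le_div_iff₀ (by positivity) (by norm_num)]
      nlinarith
    have hhalfK1 : ((1:ℝ)/2)^K ≤ 1/2 := by
      calc ((1:ℝ)/2)^K ≤ (1/2)^1 :=
        pow_le_pow_of_le_one (by norm_num) (by norm_num) hK1
      _ = 1/2 := pow_one _
    -- dyadic levels
    set c : ℕ → ℝ := fun k => 3*C₂/δ / 2^k with hcdef
    set a : ℕ → ℝ := fun k => 2*C₁*L * 2^k with hadef
    have hc_pos : ∀ k, 0 < c k := fun k => by simp only [hcdef]; positivity
    have ha_pos : ∀ k, 0 < a k := fun k => by simp only [hadef]; positivity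
    have hc_anti : ∀ k, c (k+1) ≤ c k := by
      intro k
      simp only [hcdef]
      rw [div_le_div_iff₀ (by positivity) (by positivity), pow_succ]
      have h2k : (0:ℝ) < 2^k := by positivity
      have hA : (0:ℝ) < 3*C₂/δ := by positivity
      nlinarith
    have hM_eq : ∀ k, a k * c k = 6*C₁*C₂*L/δ := by
      intro k
      simp only [hadef, hcdef]
      field_simp
      ring
    set q : ℕ → ℝ := fun k => (μ {ω | c k ≤ Y ω}).toReal with hqdef
    set p : ℕ → ℝ := fun k => (μ {ω | c (k+1) ≤ Y ω ∧ Y ω < c k}).toReal with hpdef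
    have hq_le : ∀ k, q k ≤ δ/3 * 2^k + δ₂ := by
      intro k
      have ht := htailY (c k) (hc_pos k)
      have hC : C₂ / c k = δ/3 * 2^k := by
        simp only [hcdef]
        field_simp
      rw [hC] at ht
      exact ht
    have hq0 : ∀ k, 0 ≤ q k := fun k => ENNReal.toReal_nonneg
    have hq1 : ∀ k, q k ≤ 1 := fun k => toReal_prob_le_one μ _
    have hp0 : ∀ k, 0 ≤ p k := fun k => ENNReal.toReal_nonneg
    have hsplit : ∀ k, q (k+1) = q k + p k := by
      intro k
      have hset : {ω | c (k+1) ≤ Y ω} =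
          {ω | c k ≤ Y ω} ∪ {ω | c (k+1) ≤ Y ω ∧ Y ω < c k} := by
        ext ω
        simp only [Set.mem_setOf_eq, Set.mem_union]
        constructor
        · intro h
          by_cases h' : c k ≤ Y ω
          · exact Or.inl h'
          · exact Or.inr ⟨h, lt_of_not_ge h'⟩
        · rintro (h | ⟨h, _⟩)
          · exact le_trans (hc_anti k) h
          · exact h
      have hdisj : Disjoint {ω | c k ≤ Y ω} {ω | c (k+1) ≤ Y ω ∧ Y ω < c k} := by
        rw [Set.disjoint_left]
        rintro ω h1 ⟨_, h2⟩
        exact absurd h1 (not_le.2 h2)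
      have hmeas : MeasurableSet {ω | c (k+1) ≤ Y ω ∧ Y ω < c k} :=
        hY measurableSet_Ico
      simp only [hqdef, hpdef]
      rw [hset, measure_union hdisj hmeas,
        ENNReal.toReal_add (measure_ne_top _ _) (measure_ne_top _ _)]
    have hp_eq : ∀ k, p k = q (k+1) - q k := fun k => by linarith [hsplit k]
    -- tail bound for X at level k
    have hx_le : ∀ k, (μ {ω | a k ≤ X ω}).toReal ≤ (1/2)^k / (2*L) + δ₁ := by
      intro k
      have ht := htailX (a k) (ha_pos k)
      have hC : C₁ / a k = (1/2)^k / (2*L) := by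
        simp only [hadef]
        have hpk : ((1:ℝ)/2)^k * 2^k = 1 := by rw [← mul_pow]; norm_num
        rw [div_eq_div_iff (by positivity) (by positivity)]
        linear_combination (-2)*C₁*L*hpk
      rw [hC] at ht
      exact ht
    have hx0 : ∀ k, (0:ℝ) ≤ (μ {ω | a k ≤ X ω}).toReal := fun k => ENNReal.toReal_nonneg
    -- the inclusion
    have hsub : {ω | 6 * C₁ * C₂ * L / δ ≤ X ω * Y ω} ⊆
        ({ω | c 0 ≤ Y ω} ∪
          ⋃ k ∈ Finset.range K, ({ω | a k ≤ X ω} ∩ {ω | c (k+1) ≤ Y ω ∧ Y ω < c k})) ∪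
        ({ω | a K ≤ X ω} ∩ {ω | Y ω < c K}) := by
      intro ω hω
      simp only [Set.mem_setOf_eq] at hω
      have key : ∀ k, Y ω < c k → a k ≤ X ω := by
        intro k hk
        by_contra hak
        push_neg at hak
        have h1 : X ω * Y ω ≤ X ω * c k := mul_le_mul_of_nonneg_left hk.le (hXnn ω)
        have h2 : X ω * c k < a k * c k := mul_lt_mul_of_pos_right hak (hc_pos k)
        rw [hM_eq k] at h2
        linarith
      by_cases h0 : c 0 ≤ Y ω
      · exact Or.inl (Or.inl h0)
      · push_neg at h0
        by_cases hKc : c K ≤ Y ω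
        · -- find the dyadic level
          have hex : ∃ j, c j ≤ Y ω := ⟨K, hKc⟩
          have hjs : c (Nat.find hex) ≤ Y ω := Nat.find_spec hex
          have hj0 : Nat.find hex ≠ 0 := by
            intro h
            rw [h] at hjs
            exact absurd hjs (not_le.2 h0)
          obtain ⟨k, hk⟩ : ∃ k, Nat.find hex = k + 1 :=
            ⟨Nat.find hex - 1, (Nat.succ_pred_eq_of_pos (Nat.pos_of_ne_zero hj0)).symm⟩
          have hjK : Nat.find hex ≤ K := Nat.find_min' hex hKc
          have hklt : k < K := by omega
          have hYk : Y ω < c k := by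
            have := Nat.find_min hex (by omega : k < Nat.find hex)
            exact lt_of_not_ge this
          refine Or.inl (Or.inr ?_)
          simp only [Set.mem_iUnion, Set.mem_inter_iff, Set.mem_setOf_eq]
          exact ⟨k, Finset.mem_range.2 hklt, key k hYk, by rw [← hk]; exact hjs, hYk⟩
        · push_neg at hKc
          exact Or.inr ⟨key K hKc, hKc⟩
    -- measure computations via independence
    have hindepA : ∀ k, (μ ({ω | a k ≤ X ω} ∩ {ω | c (k+1) ≤ Y ω ∧ Y ω < c k})).toReal
        = (μ {ω | a k ≤ X ω}).toReal * p k := by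
      intro k
      simp only [hpdef]
      have h1 : {ω | a k ≤ X ω} = X ⁻¹' Set.Ici (a k) := rfl
      have h2 : {ω | c (k+1) ≤ Y ω ∧ Y ω < c k} = Y ⁻¹' Set.Ico (c (k+1)) (c k) := rfl
      rw [h1, h2, hindep.measure_inter_preimage_eq_mul _ _ measurableSet_Ici measurableSet_Ico,
        ENNReal.toReal_mul]
    have hindepB : (μ ({ω | a K ≤ X ω} ∩ {ω | Y ω < c K})).toReal
        = (μ {ω | a K ≤ X ω}).toReal * (μ {ω | Y ω < c K}).toReal := by
      have h1 : {ω | a K ≤ X ω} = X ⁻¹' Set.Ici (a K) := rfl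
      have h2 : {ω | Y ω < c K} = Y ⁻¹' Set.Iio (c K) := rfl
      rw [h1, h2, hindep.measure_inter_preimage_eq_mul _ _ measurableSet_Ici measurableSet_Iio,
        ENNReal.toReal_mul]
    have hcompl : (μ {ω | Y ω < c K}).toReal = 1 - q K := by
      have hc' : {ω | Y ω < c K} = {ω | c K ≤ Y ω}ᶜ := by
        ext ω; simp [not_le]
      have hmeasK : MeasurableSet {ω | c K ≤ Y ω} := hY measurableSet_Ici
      rw [hc', measure_compl hmeasK (measure_ne_top _ _), measure_univ,
        ENNReal.toReal_sub_of_le prob_le_one ENNReal.one_ne_top]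
      simp [hqdef]
    -- step 1 : union bound
    have step1 : (μ {ω | 6 * C₁ * C₂ * L / δ ≤ X ω * Y ω}).toReal ≤
        q 0 + (∑ k ∈ Finset.range K,
          (μ ({ω | a k ≤ X ω} ∩ {ω | c (k+1) ≤ Y ω ∧ Y ω < c k})).toReal) +
        (μ ({ω | a K ≤ X ω} ∩ {ω | Y ω < c K})).toReal := by
      calc (μ {ω | 6 * C₁ * C₂ * L / δ ≤ X ω * Y ω}).toReal
          ≤ (μ (({ω | c 0 ≤ Y ω} ∪
              ⋃ k ∈ Finset.range K,
                ({ω | a k ≤ X ω} ∩ {ω | c (k+1) ≤ Y ω ∧ Y ω < c k})) ∪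
            ({ω | a K ≤ X ω} ∩ {ω | Y ω < c K}))).toReal :=
            ENNReal.toReal_mono (measure_ne_top _ _) (measure_mono hsub)
        _ ≤ (μ ({ω | c 0 ≤ Y ω} ∪
              ⋃ k ∈ Finset.range K,
                ({ω | a k ≤ X ω} ∩ {ω | c (k+1) ≤ Y ω ∧ Y ω < c k}))).toReal +
            (μ ({ω | a K ≤ X ω} ∩ {ω | Y ω < c K})).toReal := toReal_union_le' μ _ _
        _ ≤ ((μ {ω | c 0 ≤ Y ω}).toReal +
              (μ (⋃ k ∈ Finset.range K,
                ({ω | a k ≤ X ω} ∩ {ω | c (k+1) ≤ Y ω ∧ Y ω < c k}))).toReal) +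
            (μ ({ω | a K ≤ X ω} ∩ {ω | Y ω < c K})).toReal :=
            add_le_add_left (toReal_union_le' μ _ _) _
        _ ≤ _ := by
            refine add_le_add_left (add_le_add_right ?_ _) _
            exact toReal_biUnion_le' μ K _
    -- step 2 : bound the sum
    have hprodk : ∀ k : ℕ, ((1:ℝ)/2)^k * 2^k = 1 := by
      intro k
      rw [← mul_pow]
      norm_num
    have hsum1 : (∑ k ∈ Finset.range K,
          (μ ({ω | a k ≤ X ω} ∩ {ω | c (k+1) ≤ Y ω ∧ Y ω < c k})).toReal) ≤
        (∑ k ∈ Finset.range K, (1/(2*L)) * ((1/2)^k * p k)) + δ₁ * (q K - q 0) := by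
      have h1 : ∀ k ∈ Finset.range K,
          (μ ({ω | a k ≤ X ω} ∩ {ω | c (k+1) ≤ Y ω ∧ Y ω < c k})).toReal ≤
          (1/(2*L)) * ((1/2)^k * p k) + δ₁ * p k := by
        intro k _
        rw [hindepA k]
        have := mul_le_mul_of_nonneg_right (hx_le k) (hp0 k)
        calc (μ {ω | a k ≤ X ω}).toReal * p k ≤ ((1/2)^k / (2*L) + δ₁) * p k := this
          _ = (1/(2*L)) * ((1/2)^k * p k) + δ₁ * p k := by ring
      calc (∑ k ∈ Finset.range K,
            (μ ({ω | a k ≤ X ω} ∩ {ω | c (k+1) ≤ Y ω ∧ Y ω < c k})).toReal)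
          ≤ ∑ k ∈ Finset.range K, ((1/(2*L)) * ((1/2)^k * p k) + δ₁ * p k) :=
            Finset.sum_le_sum h1
        _ = (∑ k ∈ Finset.range K, (1/(2*L)) * ((1/2)^k * p k)) +
            ∑ k ∈ Finset.range K, δ₁ * p k := Finset.sum_add_distrib
        _ = (∑ k ∈ Finset.range K, (1/(2*L)) * ((1/2)^k * p k)) + δ₁ * (q K - q 0) := by
            congr 1
            rw [← Finset.mul_sum]
            congr 1
            rw [← Finset.sum_range_sub q K]
            exact Finset.sum_congr rfl (fun k _ => hp_eq k)
    -- step 3 : telescoping bound on S' = ∑ (1/2)^k p k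
    have hS' : (∑ k ∈ Finset.range K, ((1:ℝ)/2)^k * p k) ≤ ((K:ℝ)+2)*δ/3 + 3*δ₂ := by
      have htele : ∀ k, ((1:ℝ)/2)^k * p k =
          ((2*(1/2)^(k+1)*q (k+1)) - (2*(1/2)^k*q k)) + (1/2)^k * q k := by
        intro k
        rw [hp_eq k]
        ring
      have hgeom : (∑ k ∈ Finset.range K, ((1:ℝ)/2)^k) ≤ 2 := by
        rw [geom_sum_eq (by norm_num : ((1:ℝ)/2) ≠ 1)]
        rw [div_le_iff_of_neg (by norm_num : ((1:ℝ)/2) - 1 < 0)]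
        have : (0:ℝ) ≤ (1/2:ℝ)^K := by positivity
        linarith
      have hsum2 : (∑ k ∈ Finset.range K, ((1:ℝ)/2)^k * q k) ≤ (K:ℝ)*δ/3 + 2*δ₂ := by
        calc (∑ k ∈ Finset.range K, ((1:ℝ)/2)^k * q k)
            ≤ ∑ k ∈ Finset.range K, ((1:ℝ)/2)^k * (δ/3 * 2^k + δ₂) :=
              Finset.sum_le_sum (fun k _ =>
                mul_le_mul_of_nonneg_left (hq_le k) (by positivity))
          _ = ∑ k ∈ Finset.range K, (δ/3 + δ₂ * (1/2)^k) := by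
              refine Finset.sum_congr rfl (fun k _ => ?_)
              have := hprodk k
              nlinarith [hprodk k]
          _ = (K:ℝ) * (δ/3) + δ₂ * (∑ k ∈ Finset.range K, ((1:ℝ)/2)^k) := by
              rw [Finset.sum_add_distrib, Finset.sum_const, Finset.card_range,
                ← Finset.mul_sum]
              simp [nsmul_eq_mul]
          _ ≤ (K:ℝ)*δ/3 + 2*δ₂ := by
              have := mul_le_mul_of_nonneg_left hgeom hδ₂.le
              nlinarith
      have htelesum : (∑ k ∈ Finset.range K, ((1:ℝ)/2)^k * p k) =
          (2*(1/2)^K*q K - 2*(1/2)^0*q 0) + ∑ k ∈ Finset.range K, ((1:ℝ)/2)^k * q k := by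
        calc (∑ k ∈ Finset.range K, ((1:ℝ)/2)^k * p k)
            = ∑ k ∈ Finset.range K,
                (((2*(1/2)^(k+1)*q (k+1)) - (2*(1/2)^k*q k)) + (1/2)^k * q k) :=
              Finset.sum_congr rfl (fun k _ => htele k)
          _ = (∑ k ∈ Finset.range K, ((2*(1/2)^(k+1)*q (k+1)) - (2*(1/2)^k*q k))) +
              ∑ k ∈ Finset.range K, ((1:ℝ)/2)^k * q k := Finset.sum_add_distrib
          _ = (2*(1/2)^K*q K - 2*(1/2)^0*q 0) + ∑ k ∈ Finset.range K, ((1:ℝ)/2)^k * q k := by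
              rw [Finset.sum_range_sub (fun k => 2*((1:ℝ)/2)^k*q k) K]
      have hgK : 2*((1:ℝ)/2)^K*q K ≤ 2*δ/3 + δ₂ := by
        have h1 : q K ≤ δ/3 * 2^K + δ₂ := hq_le K
        have h2 : (0:ℝ) ≤ 2*(1/2)^K := by positivity
        have h3 : 2*((1:ℝ)/2)^K*q K ≤ 2*(1/2)^K * (δ/3 * 2^K + δ₂) := by
          nlinarith [mul_le_mul_of_nonneg_left h1 h2]
        have h4 : 2*((1:ℝ)/2)^K * (δ/3 * 2^K + δ₂) = 2*δ/3 + 2*(1/2)^K*δ₂ := by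
          have := hprodk K
          nlinarith
        rw [h4] at h3
        nlinarith [hhalfK1, hδ₂]
      rw [htelesum]
      have hg0 : (0:ℝ) ≤ 2*(1/2:ℝ)^0*q 0 := by
        have := hq0 0
        norm_num
        linarith
      nlinarith [hsum2, hgK]
    -- step 4 : residual term
    have hres : (μ ({ω | a K ≤ X ω} ∩ {ω | Y ω < c K})).toReal ≤
        δ/(6*L) + δ₁ * (1 - q K) := by
      rw [hindepB, hcompl]
      have h1 : (0:ℝ) ≤ 1 - q K := by linarith [hq1 K]
      have h2 : (μ {ω | a K ≤ X ω}).toReal * (1 - q K) ≤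
          ((1/2)^K / (2*L) + δ₁) * (1 - q K) :=
        mul_le_mul_of_nonneg_right (hx_le K) h1
      have h3 : ((1:ℝ)/2)^K / (2*L) * (1 - q K) ≤ (1/2)^K / (2*L) := by
        have : (0:ℝ) ≤ (1/2:ℝ)^K / (2*L) := by positivity
        nlinarith [hq0 K]
      have h4 : ((1:ℝ)/2)^K / (2*L) ≤ δ/(6*L) := by
        rw [div_le_div_iff₀ (by positivity) (by positivity)]
        nlinarith [mul_le_mul_of_nonneg_right hhalfK (by linarith : (0:ℝ) ≤ 6*L)]
      nlinarith
    -- final assembly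
    have hmulS : (∑ k ∈ Finset.range K, (1/(2*L)) * ((1/2:ℝ)^k * p k))
        = (1/(2*L)) * (∑ k ∈ Finset.range K, ((1:ℝ)/2)^k * p k) := by
      rw [Finset.mul_sum]
    have hmulS' : (1/(2*L)) * (∑ k ∈ Finset.range K, ((1:ℝ)/2)^k * p k)
        ≤ (1/(2*L)) * (((K:ℝ)+2)*δ/3 + 3*δ₂) :=
      mul_le_mul_of_nonneg_left hS' (by positivity)
    have hfrac : (1/(2*L)) * (((K:ℝ)+2)*δ/3 + 3*δ₂) + δ/(6*L) ≤ 2*δ/3 + δ₂ := by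
      have heq : (1/(2*L)) * (((K:ℝ)+2)*δ/3 + 3*δ₂) + δ/(6*L)
          = (((K:ℝ)+3)*δ + 9*δ₂)/(6*L) := by
        field_simp
        ring
      rw [heq, div_le_iff₀ (by positivity : (0:ℝ) < 6*L)]
      nlinarith [mul_le_mul_of_nonneg_right hK4 hδ0.le,
        mul_nonneg (by linarith : (0:ℝ) ≤ L - 2) hδ₂.le]
    have hδ₁sum : δ₁ * (q K - q 0) + δ₁ * (1 - q K) ≤ δ₁ := by
      nlinarith [hq0 0, hδ₁]
    have hq0le : q 0 ≤ δ/3 + δ₂ := by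
      have := hq_le 0
      norm_num at this
      linarith
    linarith [step1, hsum1, hres, hmulS, hmulS', hfrac, hδ₁sum, hq0le]
end
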